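/- arXiv:1301.1443 — 4 statements merged into one kernel-verified Lean document; each statement's English description precedes it below -/
import Mathlib

section
/- Let C be an additive category. Define the category C_Q to have the same objects as C and morphisms Hom_{C_Q}(E,F) = Hom_C(E,F) ⊗_Z Q. Then C_Q is the localization of C at the class of isogenies, i.e. at the morphisms u : M → N such that there exist a morphism v : N → M and a nonzero integer n with v∘u = n·id_M and u∘v = n·id_N. -/
open CategoryTheory TensorProduct

universe v u

variable (C : Type u) [Category.{v} C] [Preadditive C]

/-- Isogenies in an additive category: morphisms `u : M ⟶ N` admitting `v : N ⟶ M`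
and a nonzero integer `n` with `v∘u = n·id_M` and `u∘v = n·id_N`. -/
def Isogenies : CategoryTheory.MorphismProperty C :=
  fun M N u => ∃ (v : N ⟶ M) (n : ℤ), n ≠ 0 ∧ u ≫ v = n • 𝟙 M ∧ v ≫ u = n • 𝟙 N

/-- The category `C_ℚ` of objects of `C` up to isogeny: same objects,
morphisms `Hom(E,F) ⊗_ℤ ℚ`. -/
structure CQ where
  /-- the underlying object -/
  obj : C

variable {C}

/-- Composition, bilinear over the pure-tensor formula `(f⊗q) ≫ (g⊗r) = (f≫g)⊗(qr)`. -/
noncomputable def CQ.comp {X Y Z : CQ C}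
    (x : (X.obj ⟶ Y.obj) ⊗[ℤ] ℚ) (y : (Y.obj ⟶ Z.obj) ⊗[ℤ] ℚ) :
    (X.obj ⟶ Z.obj) ⊗[ℤ] ℚ :=
  (TensorProduct.map
      (TensorProduct.lift
        { toFun := fun f =>
            { toFun := fun g => f ≫ g
              map_add' := fun g g' => Preadditive.comp_add _ _ _ _ _ _
              map_smul' := fun n g => by simp }
          map_add' := fun f f' => by ext g; simp [Preadditive.add_comp]
          map_smul' := fun n f => by ext g; simp })
      (LinearMap.mul' ℤ ℚ))
    ((TensorProduct.tensorTensorTensorComm ℤ (X.obj ⟶ Y.obj) ℚ (Y.obj ⟶ Z.obj) ℚ)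
      (x ⊗ₜ y))

theorem CQ.comp_zero_left {X Y Z : CQ C} (y : (Y.obj ⟶ Z.obj) ⊗[ℤ] ℚ) :
    CQ.comp (X := X) (0 : (X.obj ⟶ Y.obj) ⊗[ℤ] ℚ) y = 0 := by
  simp [CQ.comp]

theorem CQ.comp_zero_right {X Y Z : CQ C} (x : (X.obj ⟶ Y.obj) ⊗[ℤ] ℚ) :
    CQ.comp (Z := Z) x (0 : (Y.obj ⟶ Z.obj) ⊗[ℤ] ℚ) = 0 := by
  simp [CQ.comp]

theorem CQ.comp_add_left {X Y Z : CQ C} (a b : (X.obj ⟶ Y.obj) ⊗[ℤ] ℚ)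
    (y : (Y.obj ⟶ Z.obj) ⊗[ℤ] ℚ) :
    CQ.comp (a + b) y = CQ.comp a y + CQ.comp b y := by
  simp [CQ.comp, add_tmul]

theorem CQ.comp_add_right {X Y Z : CQ C} (x : (X.obj ⟶ Y.obj) ⊗[ℤ] ℚ)
    (a b : (Y.obj ⟶ Z.obj) ⊗[ℤ] ℚ) :
    CQ.comp (x) (a + b) = CQ.comp x a + CQ.comp x b := by
  simp [CQ.comp, tmul_add]

theorem CQ.comp_tmul {X Y Z : CQ C} (f : X.obj ⟶ Y.obj) (q : ℚ)
    (g : Y.obj ⟶ Z.obj) (r : ℚ) :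
    CQ.comp (f ⊗ₜ q) (g ⊗ₜ r) = (f ≫ g) ⊗ₜ[ℤ] (q * r) := by
  simp [CQ.comp]

noncomputable instance : Category (CQ C) where
  Hom X Y := (X.obj ⟶ Y.obj) ⊗[ℤ] ℚ
  id X := 𝟙 X.obj ⊗ₜ (1 : ℚ)
  comp := CQ.comp
  id_comp := by
    intro X Y f
    show CQ.comp _ _ = _
    induction f using TensorProduct.induction_on with
    | zero => simp [CQ.comp]
    | tmul g r => simp [CQ.comp]
    | add a b ha hb =>
      rw [CQ.comp_add_right, ha, hb]
  comp_id := by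
    intro X Y f
    show CQ.comp _ _ = _
    induction f using TensorProduct.induction_on with
    | zero => simp [CQ.comp]
    | tmul g r => simp [CQ.comp]
    | add a b ha hb =>
      rw [CQ.comp_add_left, ha, hb]
  assoc := by
    intro W X Y Z f g h
    show CQ.comp (CQ.comp f g) h = CQ.comp f (CQ.comp g h)
    induction f using TensorProduct.induction_on with
    | zero => rw [CQ.comp_zero_left, CQ.comp_zero_left, CQ.comp_zero_left]
    | add a b ha hb =>
      rw [CQ.comp_add_left, CQ.comp_add_left, CQ.comp_add_left, ha, hb]
    | tmul f q =>
      induction g using TensorProduct.induction_on with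
      | zero => rw [CQ.comp_zero_right, CQ.comp_zero_left, CQ.comp_zero_left,
          CQ.comp_zero_right]
      | add a b ha hb =>
        rw [CQ.comp_add_right, CQ.comp_add_left, CQ.comp_add_left, ha, hb,
          CQ.comp_add_right]
      | tmul g r =>
        induction h using TensorProduct.induction_on with
        | zero => rw [CQ.comp_zero_right, CQ.comp_zero_right, CQ.comp_zero_right]
        | add a b ha hb =>
          rw [CQ.comp_add_right, CQ.comp_add_right, ha, hb, CQ.comp_add_right]
        | tmul h s =>
          rw [CQ.comp_tmul, CQ.comp_tmul, CQ.comp_tmul, CQ.comp_tmul,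
            Category.assoc, mul_assoc]

/-- The localization functor `C ⥤ C_ℚ`. -/
noncomputable def QFunctor (C : Type u) [Category.{v} C] [Preadditive C] :
    C ⥤ CQ C where
  obj X := ⟨X⟩
  map f := f ⊗ₜ (1 : ℚ)
  map_id X := rfl
  map_comp := by
    intro X Y Z f g
    show _ = CQ.comp _ _
    simp [CQ.comp]

/-!
STATEMENT 0: For an additive category `C`, the category `C_ℚ` (same objects,
`Hom(E,F) ⊗_ℤ ℚ`) together with the canonical functor `C ⥤ C_ℚ` is the
localization of `C` at the class of isogenies.
-/

/-! ### Auxiliary: `M ⊗[ℤ] ℚ` as a localized module -/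

section TensorLemmas
variable {M : Type*} [AddCommGroup M]

/-- The canonical map `M → M ⊗[ℤ] ℚ`. -/
noncomputable def ratMap (M : Type*) [AddCommGroup M] : M →ₗ[ℤ] M ⊗[ℤ] ℚ :=
  (TensorProduct.comm ℤ ℚ M : ℚ ⊗[ℤ] M ≃ₗ[ℤ] M ⊗[ℤ] ℚ).toLinearMap ∘ₗ (TensorProduct.mk ℤ ℚ M) 1

@[simp] lemma ratMap_apply (m : M) : ratMap M m = m ⊗ₜ (1:ℚ) := rfl

instance : IsLocalizedModule (nonZeroDivisors ℤ) ((TensorProduct.mk ℤ ℚ M) 1) :=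
  (isLocalizedModule_iff_isBaseChange (nonZeroDivisors ℤ) ℚ _).2 (TensorProduct.isBaseChange ℤ M ℚ)

instance : IsLocalizedModule (nonZeroDivisors ℤ) (ratMap M) :=
  IsLocalizedModule.of_linearEquiv _ _ _

lemma smul_tmul_inv (m : M) (s : ℤ) (hs : s ≠ 0) :
    s • (m ⊗ₜ[ℤ] ((s:ℚ)⁻¹)) = m ⊗ₜ[ℤ] (1:ℚ) := by
  rw [smul_tmul', smul_tmul, zsmul_eq_mul, mul_inv_cancel₀ (by exact_mod_cast hs)]

lemma rat_tensor_repr (z : M ⊗[ℤ] ℚ) :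
    ∃ (m : M) (s : ℤ), s ≠ 0 ∧ z = m ⊗ₜ ((s : ℚ)⁻¹) := by
  obtain ⟨⟨m, s⟩, hs⟩ := IsLocalizedModule.surj (nonZeroDivisors ℤ) (ratMap M) z
  have hs0 : (s : ℤ) ≠ 0 := nonZeroDivisors.coe_ne_zero s
  refine ⟨m, s, hs0, ?_⟩
  apply IsLocalizedModule.smul_injective (ratMap M) s
  show (s:ℤ) • z = (s:ℤ) • (m ⊗ₜ[ℤ] ((s:ℚ)⁻¹))
  rw [smul_tmul_inv m _ hs0, ← ratMap_apply, ← hs, Submonoid.smul_def]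

lemma rat_tensor_eq {m m' : M} {s s' : ℤ} (hs : s ≠ 0) (hs' : s' ≠ 0)
    (h : m ⊗ₜ[ℤ] ((s:ℚ)⁻¹) = m' ⊗ₜ[ℤ] ((s':ℚ)⁻¹)) :
    ∃ c : ℤ, c ≠ 0 ∧ (c * s') • m = (c * s) • m' := by
  have e1 : ratMap M (s' • m) = (s * s') • (m ⊗ₜ[ℤ] ((s:ℚ)⁻¹)) := by
    rw [ratMap_apply, smul_tmul, smul_tmul', smul_tmul]
    congr 1
    push_cast [zsmul_eq_mul]
    field_simp
  have e2 : ratMap M (s • m') = (s * s') • (m' ⊗ₜ[ℤ] ((s':ℚ)⁻¹)) := by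
    rw [ratMap_apply, smul_tmul, smul_tmul', smul_tmul]
    congr 1
    push_cast [zsmul_eq_mul]
    field_simp
  have key : ratMap M (s' • m) = ratMap M (s • m') := by rw [e1, e2, h]
  obtain ⟨c, hc⟩ := IsLocalizedModule.exists_of_eq
    (S := nonZeroDivisors ℤ) (f := ratMap M) key
  refine ⟨c, nonZeroDivisors.coe_ne_zero c, ?_⟩
  simpa [Submonoid.smul_def, smul_smul] using hc

end TensorLemmas

/-! ### The lift of a functor inverting isogenies -/

lemma isogenies_smul_id (n : ℤ) (hn : n ≠ 0) (X : C) : Isogenies C (n • 𝟙 X) :=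
  ⟨𝟙 X, n, hn, by simp, by simp⟩

section Lift

variable {E : Type*} [Category E] (F : C ⥤ E) (hF : (Isogenies C).IsInvertedBy F)
include hF

lemma isIso_F_smul (n : ℤ) (hn : n ≠ 0) (X : C) : IsIso (F.map (n • 𝟙 X)) :=
  hF _ (isogenies_smul_id n hn X)

omit hF in
lemma map_smul_eq {X Y : C} (m : X ⟶ Y) (k : ℤ) :
    F.map (k • m) = F.map m ≫ F.map (k • 𝟙 Y) := by
  rw [← F.map_comp]
  congr 1
  simp

omit hF in
lemma iota_mul (k l : ℤ) (X : C) :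
    F.map (k • 𝟙 X) ≫ F.map (l • 𝟙 X) = F.map ((k * l) • 𝟙 X) := by
  rw [← F.map_comp]
  congr 1
  simp [smul_smul, mul_comm]

omit hF in
lemma iota_comm_map {X Y : C} (m : X ⟶ Y) (k : ℤ) :
    F.map (k • 𝟙 X) ≫ F.map m = F.map m ≫ F.map (k • 𝟙 Y) := by
  rw [← F.map_comp, ← F.map_comp]
  congr 1
  simp

lemma inv_iota_comm_map {X Y : C} (m : X ⟶ Y) (k : ℤ) (hk : k ≠ 0) :
    haveI := isIso_F_smul F hF k hk X
    haveI := isIso_F_smul F hF k hk Y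
    inv (F.map (k • 𝟙 X)) ≫ F.map m = F.map m ≫ inv (F.map (k • 𝟙 Y)) := by
  haveI := isIso_F_smul F hF k hk X
  haveI := isIso_F_smul F hF k hk Y
  rw [IsIso.inv_comp_eq, ← Category.assoc, iota_comm_map, Category.assoc,
    IsIso.hom_inv_id, Category.comp_id]

/-- The morphism `F m ≫ F(s • 𝟙)⁻¹` representing `m ⊗ (1/s)`. -/
noncomputable def psi {X Y : C} (m : X ⟶ Y) (s : ℤ) (hs : s ≠ 0) :
    F.obj X ⟶ F.obj Y :=
  haveI := isIso_F_smul F hF s hs Y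
  F.map m ≫ inv (F.map (s • 𝟙 Y))

lemma psi_eq {X Y : C} (m m' : X ⟶ Y) (s s' : ℤ) (hs : s ≠ 0) (hs' : s' ≠ 0)
    (c : ℤ) (hc : c ≠ 0) (h : (c * s') • m = (c * s) • m') :
    psi F hF m s hs = psi F hF m' s' hs' := by
  haveI := isIso_F_smul F hF s hs Y
  haveI := isIso_F_smul F hF s' hs' Y
  haveI := isIso_F_smul F hF (s * (s' * c)) (mul_ne_zero hs (mul_ne_zero hs' hc)) Y
  have hmap : F.map m ≫ F.map ((c * s') • 𝟙 Y) = F.map m' ≫ F.map ((c * s) • 𝟙 Y) := by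
    rw [← map_smul_eq, ← map_smul_eq, h]
  unfold psi
  rw [← cancel_mono (F.map ((s * (s' * c)) • 𝟙 Y))]
  calc (F.map m ≫ inv (F.map (s • 𝟙 Y))) ≫ F.map ((s * (s' * c)) • 𝟙 Y)
      = F.map m ≫ inv (F.map (s • 𝟙 Y)) ≫ F.map (s • 𝟙 Y) ≫ F.map ((c * s') • 𝟙 Y) := by
        rw [show s * (s' * c) = s * (c * s') by ring, ← iota_mul F s (c * s'), Category.assoc]
    _ = F.map m ≫ F.map ((c * s') • 𝟙 Y) := by rw [IsIso.inv_hom_id_assoc]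
    _ = F.map m' ≫ F.map ((c * s) • 𝟙 Y) := hmap
    _ = F.map m' ≫ inv (F.map (s' • 𝟙 Y)) ≫ F.map (s' • 𝟙 Y) ≫ F.map ((c * s) • 𝟙 Y) := by
        rw [IsIso.inv_hom_id_assoc]
    _ = (F.map m' ≫ inv (F.map (s' • 𝟙 Y))) ≫ F.map ((s * (s' * c)) • 𝟙 Y) := by
        rw [show s * (s' * c) = s' * (c * s) by ring, ← iota_mul F s' (c * s), Category.assoc]

lemma psi_comp {X Y Z : C} (m : X ⟶ Y) (n : Y ⟶ Z) (s t : ℤ) (hs : s ≠ 0) (ht : t ≠ 0) :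
    psi F hF (m ≫ n) (s * t) (mul_ne_zero hs ht) = psi F hF m s hs ≫ psi F hF n t ht := by
  haveI := isIso_F_smul F hF s hs Z
  haveI := isIso_F_smul F hF t ht Z
  haveI := isIso_F_smul F hF (s * t) (mul_ne_zero hs ht) Z
  haveI := isIso_F_smul F hF s hs Y
  haveI := isIso_F_smul F hF t ht Y
  unfold psi
  calc F.map (m ≫ n) ≫ inv (F.map ((s * t) • 𝟙 Z))
      = F.map m ≫ F.map n ≫ inv (F.map ((s * t) • 𝟙 Z)) := by
        rw [F.map_comp, Category.assoc]
    _ = F.map m ≫ F.map n ≫ inv (F.map (s • 𝟙 Z)) ≫ inv (F.map (t • 𝟙 Z)) := by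
        have hinv : inv (F.map ((s * t) • 𝟙 Z))
            = inv (F.map (s • 𝟙 Z)) ≫ inv (F.map (t • 𝟙 Z)) := by
          apply IsIso.inv_eq_of_hom_inv_id
          rw [show ((s * t) • 𝟙 Z : Z ⟶ Z) = (t * s) • 𝟙 Z by rw [mul_comm],
            ← iota_mul F t s]
          simp
        rw [hinv]
    _ = (F.map m ≫ inv (F.map (s • 𝟙 Y))) ≫ F.map n ≫ inv (F.map (t • 𝟙 Z)) := by
        simp only [Category.assoc]
        congr 1
        conv_rhs => rw [← Category.assoc, inv_iota_comm_map F hF n s hs, Category.assoc]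


/-- The lift of `F` on morphisms of `CQ C`. -/
noncomputable def liftHom {X Y : C} (z : (X ⟶ Y) ⊗[ℤ] ℚ) : F.obj X ⟶ F.obj Y :=
  psi F hF (rat_tensor_repr z).choose (rat_tensor_repr z).choose_spec.choose
    (rat_tensor_repr z).choose_spec.choose_spec.1

lemma liftHom_tmul {X Y : C} (m : X ⟶ Y) (s : ℤ) (hs : s ≠ 0) :
    liftHom F hF (m ⊗ₜ ((s : ℚ)⁻¹)) = psi F hF m s hs := by
  set z : (X ⟶ Y) ⊗[ℤ] ℚ := m ⊗ₜ ((s : ℚ)⁻¹) with hz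
  obtain ⟨c, hc, h⟩ := rat_tensor_eq hs (rat_tensor_repr z).choose_spec.choose_spec.1
    (hz ▸ (rat_tensor_repr z).choose_spec.choose_spec.2)
  exact (psi_eq F hF _ _ _ _ _ _ c hc h).symm

lemma liftHom_tmul_one {X Y : C} (m : X ⟶ Y) :
    liftHom F hF (m ⊗ₜ (1 : ℚ)) = F.map m := by
  haveI := isIso_F_smul F hF 1 one_ne_zero Y
  rw [show (1 : ℚ) = (((1 : ℤ) : ℚ))⁻¹ by norm_num, liftHom_tmul F hF m 1 one_ne_zero]
  unfold psi
  simp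

/-- The lifted functor `CQ C ⥤ E`. -/
noncomputable def liftFunctor : CQ C ⥤ E where
  obj X := F.obj X.obj
  map {X Y} z := liftHom F hF z
  map_id X := by
    show liftHom F hF ((𝟙 X.obj) ⊗ₜ (1 : ℚ)) = 𝟙 _
    rw [liftHom_tmul_one, F.map_id]
  map_comp {X Y Z} f g := by
    show liftHom F hF (CQ.comp f g) = liftHom F hF f ≫ liftHom F hF g
    obtain ⟨m, s, hs, hf⟩ := rat_tensor_repr (f : (X.obj ⟶ Y.obj) ⊗[ℤ] ℚ)
    obtain ⟨n, t, ht, hg⟩ := rat_tensor_repr (g : (Y.obj ⟶ Z.obj) ⊗[ℤ] ℚ)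
    rw [hf, hg, CQ.comp_tmul,
      show ((s : ℚ)⁻¹ * (t : ℚ)⁻¹) = (((s * t : ℤ) : ℚ))⁻¹ by push_cast; rw [mul_inv],
      liftHom_tmul F hF _ _ (mul_ne_zero hs ht), liftHom_tmul F hF m s hs,
      liftHom_tmul F hF n t ht, psi_comp]

end Lift

lemma qfunctor_inverts : (Isogenies C).IsInvertedBy (QFunctor C) := by
  rintro X Y u ⟨v, n, hn, huv, hvu⟩
  refine ⟨⟨v ⊗ₜ ((n : ℚ)⁻¹), ?_, ?_⟩⟩
  · show CQ.comp (u ⊗ₜ (1 : ℚ)) (v ⊗ₜ ((n : ℚ)⁻¹)) = (𝟙 X) ⊗ₜ (1 : ℚ)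
    rw [CQ.comp_tmul, one_mul, huv, ← smul_tmul', smul_tmul_inv _ n hn]
  · show CQ.comp (v ⊗ₜ ((n : ℚ)⁻¹)) (u ⊗ₜ (1 : ℚ)) = (𝟙 Y) ⊗ₜ (1 : ℚ)
    rw [CQ.comp_tmul, mul_one, hvu, ← smul_tmul', smul_tmul_inv _ n hn]

lemma qfunctor_map_smul_isIso (s : ℤ) (hs : s ≠ 0) (X : C) :
    IsIso ((QFunctor C).map (s • 𝟙 X)) :=
  qfunctor_inverts _ (isogenies_smul_id s hs X)

/-- The strict universal property of `QFunctor C`. -/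
noncomputable def qfunctorStrictUP (E : Type*) [Category E] :
    Localization.StrictUniversalPropertyFixedTarget (QFunctor C) (Isogenies C) E where
  inverts := qfunctor_inverts
  lift F hF := liftFunctor F hF
  fac F hF := by
    refine CategoryTheory.Functor.ext (fun X => rfl) (fun X Y f => ?_)
    show liftHom F hF (f ⊗ₜ (1 : ℚ)) = _
    rw [liftHom_tmul_one]
    dsimp [liftFunctor, QFunctor]
    simp
    exact (Category.id_comp _).symm
  uniq F₁ F₂ h := by
    refine CategoryTheory.Functor.ext (fun X => Functor.congr_obj h X.obj) (fun X Y f => ?_)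
    obtain ⟨m, s, hs, hf⟩ := rat_tensor_repr (f : (X.obj ⟶ Y.obj) ⊗[ℤ] ℚ)
    haveI := qfunctor_map_smul_isIso (C := C) s hs Y.obj
    have hfact : f = (QFunctor C).map m ≫ inv ((QFunctor C).map (s • 𝟙 Y.obj)) := by
      refine (IsIso.eq_comp_inv ((QFunctor C).map (s • 𝟙 Y.obj))).2 ?_
      rw [hf]
      show CQ.comp (m ⊗ₜ[ℤ] ((s : ℚ)⁻¹)) ((s • 𝟙 Y.obj) ⊗ₜ[ℤ] (1 : ℚ))
        = m ⊗ₜ[ℤ] (1 : ℚ)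
      rw [CQ.comp_tmul, Preadditive.comp_zsmul, Category.comp_id, mul_one,
        ← smul_tmul', smul_tmul_inv _ s hs]
    have h1 := Functor.congr_hom h m
    have h2 := Functor.congr_hom h (s • 𝟙 Y.obj)
    simp only [Functor.comp_map] at h1 h2
    haveI : IsIso (F₂.map ((QFunctor C).map (s • 𝟙 Y.obj))) :=
      inferInstance
    have h2' : inv (F₁.map ((QFunctor C).map (s • 𝟙 Y.obj)))
        = eqToHom (Functor.congr_obj h Y.obj)
          ≫ inv (F₂.map ((QFunctor C).map (s • 𝟙 Y.obj)))
          ≫ eqToHom (Functor.congr_obj h Y.obj).symm := by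
      apply IsIso.inv_eq_of_hom_inv_id
      rw [h2]
      simp
    have key : F₁.map ((QFunctor C).map m ≫ inv ((QFunctor C).map (s • 𝟙 Y.obj)))
        = eqToHom (Functor.congr_obj h X.obj)
          ≫ F₂.map ((QFunctor C).map m ≫ inv ((QFunctor C).map (s • 𝟙 Y.obj)))
          ≫ eqToHom (Functor.congr_obj h Y.obj).symm := by
      rw [F₁.map_comp, F₂.map_comp, F₁.map_inv, F₂.map_inv, h1, h2']
      simp
    rw [hfact]
    exact key

theorem statement0 (C : Type u) [Category.{v} C] [Preadditive C] :
    (QFunctor C).IsLocalization (Isogenies C) := by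
  exact Functor.IsLocalization.mk' _ _ (qfunctorStrictUP _) (qfunctorStrictUP _)
end

section
/- Let A be a commutative ring, B a commutative A-algebra, λ ∈ A, and (M, ∇) a module with λ-connection relative to B/A, meaning ∇ : M → Ω¹_{B/A} ⊗_B M is A-linear and satisfies ∇(xs) = λ·d(x)⊗s + x·∇(s) for x ∈ B, s ∈ M. Suppose there is an A-module E and a B-linear isomorphism γ : E ⊗_A B ≅ Ω¹_{B/A} such that d(γ(ω⊗1)) = 0 in Ω²_{B/A} for every ω ∈ E. Then the λ-connection ∇ is integrable (∇∘∇ = 0 on the induced extension to forms) if and only if the induced map θ : M → E ⊗_A M obtained from ∇ via γ satisfies θ∧θ = 0, i.e. θ is an A-Higgs field on M with coefficients in E. -/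
open TensorProduct

/-!
STATEMENT 4: Integrability of λ-connections vs Higgs fields.
A a commutative ring, B a commutative A-algebra, λ ∈ A, M a B-module,
(Ω1, Ω2, d0, d1, ∧) the beginning of the de Rham complex of B/A
(d0 : B → Ω1 the universal derivation, ∧ : Ω1 × Ω1 → Ω2 the alternating wedge
product, d1 : Ω1 → Ω2 the exterior derivative, satisfying the Leibniz rule
d1(b•ω) = b•d1(ω) + d0(b)∧ω), and (M,∇) a module with λ-connection:
∇ : M → Ω1 ⊗_B M is A-linear with ∇(b•m) = λ•(d0(b) ⊗ m) + b•∇(m).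
Suppose given an A-module E and a B-linear isomorphism γ : B ⊗_A E ≅ Ω1 with
d1(γ(1⊗e)) = 0 for all e ∈ E, and let θ : M → E ⊗_A M be the map induced from
∇ via γ (through the induced isomorphism ι : E ⊗_A M ≅ Ω1 ⊗_B M).  Let
∇1 : Ω1 ⊗_B M → Ω2 ⊗_B M be the extension of ∇ to 1-forms
(∇1(ω ⊗ m) = λ•(d1(ω) ⊗ m) − ω ∧ ∇(m)) and Θ : E ⊗_A M → Λ²E ⊗_A M the
wedge-extension of θ (Θ(e ⊗ m) = (e ∧ −)(θ m)), compatible under the maps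
induced by γ.  Then ∇ is integrable (∇1∘∇ = 0) if and only if θ is a Higgs
field (θ∧θ = Θ∘θ = 0).
-/

theorem statement4 (A B : Type*) [CommRing A] [CommRing B] [Algebra A B]
    (lam : A)
    (M : Type*) [AddCommGroup M] [Module B M] [Module A M] [IsScalarTower A B M]
    (Ω1 Ω2 : Type*) [AddCommGroup Ω1] [Module B Ω1] [Module A Ω1]
    [IsScalarTower A B Ω1] [AddCommGroup Ω2] [Module B Ω2] [Module A Ω2]
    [IsScalarTower A B Ω2]
    (d0 : Derivation A B Ω1)
    (wedge : Ω1 →ₗ[B] Ω1 →ₗ[B] Ω2) (halt : ∀ ω : Ω1, wedge ω ω = 0)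
    (d1 : Ω1 →ₗ[A] Ω2)
    (hd1Leib : ∀ (b : B) (ω : Ω1), d1 (b • ω) = b • d1 ω + wedge (d0 b) ω)
    (E Λ2E : Type*) [AddCommGroup E] [Module A E] [AddCommGroup Λ2E]
    [Module A Λ2E]
    (wE : E →ₗ[A] E →ₗ[A] Λ2E) (haltE : ∀ e : E, wE e e = 0)
    -- γ : E ⊗_A B ≅ Ω1, carrying the constant forms to closed forms
    (γ : (B ⊗[A] E) ≃ₗ[B] Ω1)
    (hγ : ∀ e : E, d1 (γ (1 ⊗ₜ e)) = 0)
    -- the λ-connection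
    (nab : M →ₗ[A] Ω1 ⊗[B] M)
    (hLeib : ∀ (b : B) (m : M),
      nab (b • m) = algebraMap A B lam • (d0 b ⊗ₜ m) + b • nab m)
    -- its extension to 1-forms
    (nab1 : Ω1 ⊗[B] M →ₗ[A] Ω2 ⊗[B] M)
    (hnab1 : ∀ (ω : Ω1) (m : M),
      nab1 (ω ⊗ₜ m) = algebraMap A B lam • (d1 ω ⊗ₜ m)
        - (LinearMap.rTensor M (wedge ω)) (nab m))
    -- the Higgs field induced from ∇ via γ
    (ι : (E ⊗[A] M) →ₗ[A] (Ω1 ⊗[B] M))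
    (hι : ∀ (e : E) (m : M), ι (e ⊗ₜ m) = γ (1 ⊗ₜ e) ⊗ₜ m)
    (hιbij : Function.Bijective ι)
    (θ : M →ₗ[A] E ⊗[A] M)
    (hθ : ∀ m : M, ι (θ m) = nab m)
    -- the wedge-extension of θ
    (Θ : (E ⊗[A] M) →ₗ[A] (Λ2E ⊗[A] M))
    (hΘ : ∀ (e : E) (m : M),
      Θ (e ⊗ₜ m) = (LinearMap.rTensor M (wE e)) (θ m))
    -- compatibility of the two wedge products under γ
    (j : (Λ2E ⊗[A] M) →ₗ[A] (Ω2 ⊗[B] M))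
    (hj : ∀ (e f : E) (m : M),
      j ((wE e f) ⊗ₜ m) = (wedge (γ (1 ⊗ₜ e)) (γ (1 ⊗ₜ f))) ⊗ₜ m)
    (hjinj : Function.Injective j) :
    -- ∇ is integrable iff θ is a Higgs field
    (∀ m : M, nab1 (nab m) = 0) ↔ (∀ m : M, Θ (θ m) = 0) := by
  have key : ∀ (e : E) (s : E ⊗[A] M),
      LinearMap.rTensor M (wedge (γ (1 ⊗ₜ e))) (ι s)
        = j (LinearMap.rTensor M (wE e) s) := by
    intro e s
    induction s using TensorProduct.induction_on with
    | zero => simp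
    | tmul f n => simp [hι, hj]
    | add x y hx hy => simp [map_add, hx, hy]
  have main : ∀ t : E ⊗[A] M, nab1 (ι t) = - j (Θ t) := by
    intro t
    induction t using TensorProduct.induction_on with
    | zero => simp
    | tmul e m =>
        rw [hι, hnab1, hγ, hΘ, ← hθ, key]
        simp
    | add x y hx hy => simp [map_add, hx, hy, add_comm]
  constructor
  · intro h m
    apply hjinj
    have := main (θ m)
    rw [hθ, h m] at this
    exact (neg_eq_zero.mp this.symm).trans (map_zero j).symm
  · intro h m
    rw [← hθ, main, h, map_zero, neg_zero]
end

section
/- Let A be a commutative ring, B an A-algebra, λ ∈ A, and (M, N, u, ∇) a λ-isoconnexion: u : M → N is a B-linear isogeny and ∇ : M → Ω¹_{B/A} ⊗_B N is A-linear with ∇(xt) = λ·d(x) ⊗ u(t) + x·∇(t) for x ∈ B, t ∈ M. Then for any B-linear map v : N → M and integer n with u∘v = n·id_N and v∘u = n·id_M, the pairs (M, (id⊗v)∘∇) and (N, ∇∘v) are modules with (nλ)-connection, and u is a morphism of modules with (nλ)-connection from (M, (id⊗v)∘∇) to (N, ∇∘v). -/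
/-!
STATEMENT 5: λ-isoconnexions.  A a commutative ring, B a commutative A-algebra,
λ ∈ A, (M, N, u, nab) a λ-isoconnexion: u : M → N a B-linear isogeny and
nab : M → Ω¹_{B/A} ⊗_B N an A-linear map with nab(x•t) = λ·d(x) ⊗ u(t) + x·nab(t).
Then for any B-linear v : N → M and integer n with u∘v = n·id_N and v∘u = n·id_M,
(M, (id⊗v)∘nab) and (N, nab∘v) are modules with (nλ)-connection, and u is a morphism
of modules with (nλ)-connection from the first to the second.
-/

open KaehlerDifferential TensorProduct

theorem statement5 (A B : Type*) [CommRing A] [CommRing B] [Algebra A B]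
    (M N : Type*) [AddCommGroup M] [Module B M] [Module A M] [IsScalarTower A B M]
    [AddCommGroup N] [Module B N] [Module A N] [IsScalarTower A B N]
    (lam : A)
    (u : M →ₗ[B] N) (nab : M →ₗ[A] (Ω[B⁄A] ⊗[B] N))
    -- u is an isogeny of B-modules
    (hiso : ∃ (v : N →ₗ[B] M) (n : ℤ), n ≠ 0 ∧ (∀ t : M, v (u t) = n • t) ∧
      (∀ s : N, u (v s) = n • s))
    -- twisted Leibniz rule for nab
    (hLeib : ∀ (x : B) (t : M),
      nab (x • t) = algebraMap A B lam • ((KaehlerDifferential.D A B) x ⊗ₜ[B] u t)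
        + x • nab t)
    -- now fix v and n as in the statement
    (v : N →ₗ[B] M) (n : ℤ)
    (huv : ∀ s : N, u (v s) = n • s) (hvu : ∀ t : M, v (u t) = n • t) :
    -- (M, (id⊗v)∘nab) is a module with (nλ)-connection
    (∀ (x : B) (t : M),
        (LinearMap.lTensor (Ω[B⁄A]) v) (nab (x • t)) =
          algebraMap A B (n • lam) • ((KaehlerDifferential.D A B) x ⊗ₜ[B] t)
            + x • (LinearMap.lTensor (Ω[B⁄A]) v) (nab t))
    -- (N, nab∘v) is a module with (nλ)-connection
    ∧ (∀ (x : B) (s : N),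
        nab (v (x • s)) =
          algebraMap A B (n • lam) • ((KaehlerDifferential.D A B) x ⊗ₜ[B] s)
            + x • nab (v s))
    -- u is a morphism of modules with (nλ)-connection
    ∧ (∀ t : M,
        (LinearMap.lTensor (Ω[B⁄A]) u) ((LinearMap.lTensor (Ω[B⁄A]) v) (nab t)) =
          nab (v (u t))) := by
  have key : ∀ ω : Ω[B⁄A] ⊗[B] N,
      (LinearMap.lTensor (Ω[B⁄A]) u) ((LinearMap.lTensor (Ω[B⁄A]) v) ω) = n • ω := by
    intro ω
    induction ω using TensorProduct.induction_on with
    | zero => simp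
    | tmul a b => simp [huv b, TensorProduct.tmul_smul]
    | add x y hx hy => simp [hx, hy]
  refine ⟨?_, ?_, ?_⟩
  · intro x t
    rw [hLeib x t]
    simp only [map_add, LinearMap.lTensor_smul, LinearMap.lTensor_tmul, hvu t]
    congr 1
    rw [map_smul, LinearMap.lTensor_tmul, hvu t, map_zsmul, TensorProduct.tmul_smul,
      smul_comm, smul_assoc]
    exact map_smul _ x _
  · intro x s
    rw [map_smul, hLeib x (v s)]
    congr 1
    rw [huv s, TensorProduct.tmul_smul, smul_comm, map_zsmul, smul_assoc]
  · intro t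
    rw [key, hvu t, map_zsmul]
end

section
/- Let A be a commutative ring, and let 0 → A → F → E → 0 be an extension of A-modules with E projective. Then for every integer n ≥ 1 there is a natural short exact sequence of A-modules 0 → Sym^{n-1}_A(F) → Sym^n_A(F) → Sym^n_A(E) → 0, where the first map is multiplication by the image of 1 ∈ A in F and the second is induced by F → E. -/
open PiTensorProduct
open scoped TensorProduct

/-!
STATEMENT 8: For an extension 0 → A → F → E → 0 of A-modules with E projective,
and every n ≥ 1, there is a natural short exact sequence
0 → Sym^{n-1}(F) → Sym^n(F) → Sym^n(E) → 0, where the first map is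
multiplication by the image e ∈ F of 1 ∈ A and the second is induced by F → E.
Symmetric powers are realized concretely as quotients of n-fold tensor powers
by the permutation action.
-/

variable (A : Type*) [CommRing A]

/-- The symmetrization relations inside the n-th tensor power. -/
def symRel (M : Type*) [AddCommGroup M] [Module A M] (n : ℕ) :
    Submodule A (⨂[A] _ : Fin n, M) :=
  Submodule.span A
    {x | ∃ (σ : Equiv.Perm (Fin n)) (t : ⨂[A] _ : Fin n, M),
      x = t - reindex A (fun _ => M) σ t}

/-- The n-th symmetric power of `M`, as a quotient of the n-th tensor power. -/
def SymPow (M : Type*) [AddCommGroup M] [Module A M] (n : ℕ) :=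
  (⨂[A] _ : Fin n, M) ⧸ symRel A M n

noncomputable instance (M : Type*) [AddCommGroup M] [Module A M] (n : ℕ) :
    AddCommGroup (SymPow A M n) :=
  inferInstanceAs (AddCommGroup ((⨂[A] _ : Fin n, M) ⧸ symRel A M n))

noncomputable instance (M : Type*) [AddCommGroup M] [Module A M] (n : ℕ) :
    Module A (SymPow A M n) :=
  inferInstanceAs (Module A ((⨂[A] _ : Fin n, M) ⧸ symRel A M n))

/-- Functoriality: Sym^n of a linear map. -/
noncomputable def SymPow.map {M N : Type*} [AddCommGroup M] [Module A M]
    [AddCommGroup N] [Module A N] (f : M →ₗ[A] N) (n : ℕ) :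
    SymPow A M n →ₗ[A] SymPow A N n :=
  Submodule.mapQ (symRel A M n) (symRel A N n) (PiTensorProduct.map fun _ => f)
    (by
      rw [symRel, Submodule.span_le]
      rintro x ⟨σ, t, rfl⟩
      have h : PiTensorProduct.map (fun _ : Fin n => f)
            (reindex A (fun _ => M) σ t) =
          reindex A (fun _ => N) σ (PiTensorProduct.map (fun _ : Fin n => f) t) := by
        simpa using PiTensorProduct.map_reindex (fun _ : Fin n => f) σ t
      simp only [SetLike.mem_coe, Submodule.mem_comap, map_sub, h]
      exact Submodule.subset_span ⟨σ, PiTensorProduct.map (fun _ => f) t, rfl⟩)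

/-- Insertion of a fixed vector `e`, as a multilinear map:
(m₁,…,m_n) ↦ e ⊗ m₁ ⊗ ⋯ ⊗ m_n. -/
noncomputable def insertMultilinear {M : Type*} [AddCommGroup M] [Module A M]
    (e : M) (n : ℕ) :
    MultilinearMap A (fun _ : Fin n => M) (⨂[A] _ : Fin (n + 1), M) :=
  (PiTensorProduct.tprod A (s := fun _ : Fin (n + 1) => M)).curryLeft e

/-- Multiplication by `e` : Sym^n(M) → Sym^{n+1}(M). -/
noncomputable def SymPow.mulByE {M : Type*} [AddCommGroup M] [Module A M]
    (e : M) (n : ℕ) : SymPow A M n →ₗ[A] SymPow A M (n + 1) :=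
  Submodule.mapQ (symRel A M n) (symRel A M (n + 1))
    (PiTensorProduct.lift (insertMultilinear A e n)) (by
      classical
      rw [symRel, Submodule.span_le]
      rintro x ⟨σ, t, rfl⟩
      set σ' : Equiv.Perm (Fin (n + 1)) := Equiv.Perm.decomposeFin.symm (0, σ)
      have key : ∀ u : ⨂[A] _ : Fin n, M,
          PiTensorProduct.lift (insertMultilinear A e n)
              (reindex A (fun _ => M) σ u) =
            reindex A (fun _ => M) σ'
              (PiTensorProduct.lift (insertMultilinear A e n) u) := by
        intro u
        induction u using PiTensorProduct.induction_on with
        | smul_tprod c v =>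
          simp only [map_smul, reindex_tprod, lift.tprod]
          congr 1
          show PiTensorProduct.tprod A (Fin.cons e fun i => v (σ.symm i)) =
            reindex A (fun _ => M) σ' (PiTensorProduct.tprod A (Fin.cons e v))
          rw [reindex_tprod]
          congr 1
          funext j
          have hz : σ' 0 = 0 := by
            simp [σ']
          have hs : ∀ i : Fin n, σ' i.succ = (σ i).succ := by
            intro i; simp [σ']
          have hz' : σ'.symm 0 = 0 := by
            rw [Equiv.symm_apply_eq]; exact hz.symm
          have hs' : ∀ j : Fin n, σ'.symm j.succ = (σ.symm j).succ := by
            intro j; rw [Equiv.symm_apply_eq, hs, Equiv.apply_symm_apply]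
          refine Fin.cases ?_ (fun i => ?_) j
          · rw [hz']; simp
          · rw [hs']; simp
        | add a b ha hb => simp [map_add, ha, hb]
      simp only [SetLike.mem_coe, Submodule.mem_comap, map_sub, key]
      exact Submodule.subset_span ⟨σ', _, rfl⟩)

section Aux

universe uF
variable {A : Type*} [CommRing A] {F : Type*} [AddCommGroup F] [Module A F]

/-- The quotient map onto the symmetric power. -/
noncomputable def smk (n : ℕ) : (⨂[A] _ : Fin n, F) →ₗ[A] SymPow A F n :=
  (symRel A F n).mkQ

lemma smk_perm {n : ℕ} (w : Fin n → F) (σ : Equiv.Perm (Fin n)) :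
    smk (A := A) n (tprod A (w ∘ σ)) = smk n (tprod A w) := by
  have h : tprod A (w ∘ σ) = reindex A (fun _ => F) σ⁻¹ (tprod A w) := by
    rw [reindex_tprod]
    rfl
  show Submodule.Quotient.mk _ = Submodule.Quotient.mk _
  rw [Submodule.Quotient.eq, h]
  have : (tprod A (s := fun _ : Fin n => F) w) -
      reindex A (fun _ => F) σ⁻¹ (tprod A w) ∈ symRel A F n :=
    Submodule.subset_span ⟨σ⁻¹, tprod A w, rfl⟩
  simpa using Submodule.neg_mem _ this

variable (p : F →ₗ[A] F)

/-- The slots of the `j`-th term of the contraction. -/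
def slotsD (n : ℕ) (j : Fin (n + 1)) (v : Fin (n + 1) → F) : Fin n → F :=
  fun i => if (i : ℕ) < (j : ℕ) then p (v i.castSucc) else v i.succ

lemma slotsD_update_self {n : ℕ} [DecidableEq (Fin (n + 1))] (j : Fin (n + 1))
    (v : Fin (n + 1) → F) (y : F) :
    slotsD p n j (Function.update v j y) = slotsD p n j v := by
  funext i
  unfold slotsD
  by_cases h : (i : ℕ) < (j : ℕ)
  · rw [if_pos h, if_pos h, Function.update_of_ne (by
      intro hc
      apply absurd h
      rw [← hc]
      simp)]
  · rw [if_neg h, if_neg h, Function.update_of_ne (by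
      intro hc
      apply h
      rw [← hc, Fin.val_succ]
      omega)]

lemma slotsD_update {n : ℕ} [DecidableEq (Fin (n + 1))] (j k : Fin (n + 1))
    (v : Fin (n + 1) → F) (hk : k ≠ j) :
    ∃ (i₀ : Fin n) (φ : F →ₗ[A] F),
      ∀ y : F, slotsD p n j (Function.update v k y) =
        Function.update (slotsD p n j v) i₀ (φ y) := by
  have hkj : (k : ℕ) ≠ (j : ℕ) := fun h => hk (Fin.ext h)
  have hjn : (j : ℕ) < n + 1 := j.isLt
  have hkn' : (k : ℕ) < n + 1 := k.isLt
  by_cases h : (k : ℕ) < (j : ℕ)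
  · have hkn : (k : ℕ) < n := by omega
    refine ⟨⟨k, hkn⟩, p, fun y => ?_⟩
    funext i
    unfold slotsD
    by_cases hi : i = (⟨(k : ℕ), hkn⟩ : Fin n)
    · subst hi
      rw [if_pos (by simpa using h), Function.update_self,
        show (⟨(k : ℕ), hkn⟩ : Fin n).castSucc = k from Fin.ext rfl,
        Function.update_self]
    · rw [Function.update_of_ne hi]
      by_cases h2 : (i : ℕ) < (j : ℕ)
      · rw [if_pos h2, if_pos h2, Function.update_of_ne (by
          intro hc
          exact hi (Fin.ext (by simpa using congrArg Fin.val hc)))]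
      · rw [if_neg h2, if_neg h2, Function.update_of_ne (by
          intro hc
          have := congrArg Fin.val hc
          simp [Fin.val_succ] at this
          omega)]
  · have h' : (j : ℕ) < (k : ℕ) := by omega
    have hk1 : (k : ℕ) - 1 < n := by omega
    refine ⟨⟨(k : ℕ) - 1, hk1⟩, LinearMap.id, fun y => ?_⟩
    funext i
    unfold slotsD
    by_cases hi : i = (⟨(k : ℕ) - 1, hk1⟩ : Fin n)
    · subst hi
      rw [if_neg (by simp; omega), Function.update_self,
        show (⟨(k : ℕ) - 1, hk1⟩ : Fin n).succ = k from Fin.ext (by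
          simp [Fin.val_succ]; omega),
        Function.update_self]
      rfl
    · rw [Function.update_of_ne hi]
      by_cases h2 : (i : ℕ) < (j : ℕ)
      · rw [if_pos h2, if_pos h2, Function.update_of_ne (by
          intro hc
          have := congrArg Fin.val hc
          simp at this
          omega)]
      · rw [if_neg h2, if_neg h2, Function.update_of_ne (by
          intro hc
          have := congrArg Fin.val hc
          simp [Fin.val_succ] at this
          apply hi
          apply Fin.ext
          simp
          omega)]

variable (r : F →ₗ[A] A)

/-- The `j`-th term of the contraction map, as a multilinear map. -/
noncomputable def DjM (n : ℕ) (j : Fin (n + 1)) :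
    MultilinearMap A (fun _ : Fin (n + 1) => F) (SymPow A F n) where
  toFun v := r (v j) • smk n (tprod A (slotsD p n j v))
  map_update_add' {dec} v k x y := by
    by_cases hk : k = j
    · subst hk
      rw [slotsD_update_self, slotsD_update_self, slotsD_update_self,
        Function.update_self, Function.update_self, Function.update_self,
        map_add, add_smul]
    · obtain ⟨i₀, φ, hφ⟩ := slotsD_update p j k v hk
      rw [hφ, hφ, hφ, Function.update_of_ne (Ne.symm hk),
        Function.update_of_ne (Ne.symm hk), Function.update_of_ne (Ne.symm hk),
        map_add, MultilinearMap.map_update_add, map_add, smul_add]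
  map_update_smul' {dec} v k c x := by
    by_cases hk : k = j
    · subst hk
      rw [slotsD_update_self, slotsD_update_self,
        Function.update_self, Function.update_self,
        map_smul, smul_eq_mul, mul_smul]
    · obtain ⟨i₀, φ, hφ⟩ := slotsD_update p j k v hk
      rw [hφ, hφ, Function.update_of_ne (Ne.symm hk),
        Function.update_of_ne (Ne.symm hk),
        map_smul, MultilinearMap.map_update_smul, map_smul, smul_comm]

/-- The contraction map ("division by `e`"), as a multilinear map. -/
noncomputable def Dfun (n : ℕ) : MultilinearMap A (fun _ : Fin (n + 1) => F) (SymPow A F n) :=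
  ∑ j : Fin (n + 1), DjM p r n j

lemma Dfun_apply (n : ℕ) (v : Fin (n + 1) → F) :
    Dfun p r n v = ∑ j : Fin (n + 1), r (v j) • smk n (tprod A (slotsD p n j v)) := by
  simp [Dfun, DjM, MultilinearMap.sum_apply]

end Aux
section Aux2

variable {A : Type*} [CommRing A] {F : Type*} [AddCommGroup F] [Module A F]
variable (p : F →ₗ[A] F) (r : F →ₗ[A] A)

lemma slotsD_comp_swap (n : ℕ) (j : Fin (n + 1)) (v : Fin (n + 1) → F)
    (a b : Fin (n + 1)) (i₁ i₂ : Fin n)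
    (hbr : ((i₁ : ℕ) < (j : ℕ)) ↔ ((i₂ : ℕ) < (j : ℕ)))
    (ha : (if (i₁ : ℕ) < (j : ℕ) then i₁.castSucc else i₁.succ) = a)
    (hb : (if (i₂ : ℕ) < (j : ℕ) then i₂.castSucc else i₂.succ) = b) :
    slotsD p n j (v ∘ Equiv.swap a b) = slotsD p n j v ∘ Equiv.swap i₁ i₂ := by
  have va : ((a : ℕ) = (i₁ : ℕ) ∧ (i₁ : ℕ) < (j : ℕ)) ∨
      ((a : ℕ) = (i₁ : ℕ) + 1 ∧ ¬ ((i₁ : ℕ) < (j : ℕ))) := by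
    by_cases h1 : (i₁ : ℕ) < (j : ℕ)
    · exact Or.inl ⟨by rw [← ha, if_pos h1, Fin.coe_castSucc], h1⟩
    · exact Or.inr ⟨by rw [← ha, if_neg h1, Fin.val_succ], h1⟩
  have vb : ((b : ℕ) = (i₂ : ℕ) ∧ (i₂ : ℕ) < (j : ℕ)) ∨
      ((b : ℕ) = (i₂ : ℕ) + 1 ∧ ¬ ((i₂ : ℕ) < (j : ℕ))) := by
    by_cases h2 : (i₂ : ℕ) < (j : ℕ)
    · exact Or.inl ⟨by rw [← hb, if_pos h2, Fin.coe_castSucc], h2⟩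
    · exact Or.inr ⟨by rw [← hb, if_neg h2, Fin.val_succ], h2⟩
  funext i
  simp only [Function.comp_apply, slotsD]
  by_cases hi1 : i = i₁
  · subst hi1
    rw [Equiv.swap_apply_left]
    by_cases h1 : (i : ℕ) < (j : ℕ)
    · rw [if_pos h1, if_pos (hbr.mp h1)]
      rw [show i.castSucc = a from by rw [← ha, if_pos h1],
        show i₂.castSucc = b from by rw [← hb, if_pos (hbr.mp h1)],
        Equiv.swap_apply_left]
    · rw [if_neg h1, if_neg (fun hc => h1 (hbr.mpr hc))]
      rw [show i.succ = a from by rw [← ha, if_neg h1],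
        show i₂.succ = b from by rw [← hb, if_neg (fun hc => h1 (hbr.mpr hc))],
        Equiv.swap_apply_left]
  · by_cases hi2 : i = i₂
    · subst hi2
      rw [Equiv.swap_apply_right]
      by_cases h2 : (i : ℕ) < (j : ℕ)
      · rw [if_pos h2, if_pos (hbr.mpr h2)]
        rw [show i.castSucc = b from by rw [← hb, if_pos h2],
          show i₁.castSucc = a from by rw [← ha, if_pos (hbr.mpr h2)],
          Equiv.swap_apply_right]
      · rw [if_neg h2, if_neg (fun hc => h2 (hbr.mp hc))]
        rw [show i.succ = b from by rw [← hb, if_neg h2],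
          show i₁.succ = a from by rw [← ha, if_neg (fun hc => h2 (hbr.mp hc))],
          Equiv.swap_apply_right]
    · rw [Equiv.swap_apply_of_ne_of_ne hi1 hi2]
      have hv1 : (i : ℕ) ≠ (i₁ : ℕ) := fun h => hi1 (Fin.ext h)
      have hv2 : (i : ℕ) ≠ (i₂ : ℕ) := fun h => hi2 (Fin.ext h)
      by_cases hij : (i : ℕ) < (j : ℕ)
      · rw [if_pos hij, if_pos hij,
          Equiv.swap_apply_of_ne_of_ne
            (by intro hc; have := congrArg Fin.val hc;
                rw [Fin.coe_castSucc] at this; omega)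
            (by intro hc; have := congrArg Fin.val hc;
                rw [Fin.coe_castSucc] at this; omega)]
      · rw [if_neg hij, if_neg hij,
          Equiv.swap_apply_of_ne_of_ne
            (by intro hc; have := congrArg Fin.val hc;
                rw [Fin.val_succ] at this; omega)
            (by intro hc; have := congrArg Fin.val hc;
                rw [Fin.val_succ] at this; omega)]

lemma Dfun_comp_swap (n : ℕ) (e : F) (hK1 : ∀ x : F, r x • e + p x = x)
    (k : Fin n) (v : Fin (n + 1) → F) :
    Dfun p r n (v ∘ Equiv.swap k.castSucc k.succ) = Dfun p r n v := by
  classical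
  have hab : k.castSucc ≠ k.succ := by
    intro hc; have := congrArg Fin.val hc
    simp only [Fin.coe_castSucc, Fin.val_succ] at this; omega
  rw [Dfun_apply, Dfun_apply]
  have split : ∀ f : Fin (n + 1) → SymPow A F n,
      ∑ j : Fin (n + 1), f j
        = (∑ j ∈ Finset.univ \ {k.castSucc, k.succ}, f j) + (f k.castSucc + f k.succ) := by
    intro f
    rw [← Finset.sum_sdiff (Finset.subset_univ {k.castSucc, k.succ}), Finset.sum_pair hab]
  rw [split, split]
  congr 1
  · apply Finset.sum_congr rfl
    intro j hj
    have hj' : j ≠ k.castSucc ∧ j ≠ k.succ := by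
      rcases Finset.mem_sdiff.mp hj with ⟨-, h2⟩
      simp only [Finset.mem_insert, Finset.mem_singleton] at h2
      tauto
    have hjv1 : (j : ℕ) ≠ (k : ℕ) := by
      intro hc; exact hj'.1 (Fin.ext (by simp only [Fin.coe_castSucc]; omega))
    have hjv2 : (j : ℕ) ≠ (k : ℕ) + 1 := by
      intro hc; exact hj'.2 (Fin.ext (by simp only [Fin.val_succ]; omega))
    have hvj : (v ∘ Equiv.swap k.castSucc k.succ) j = v j := by
      simp only [Function.comp_apply]
      rw [Equiv.swap_apply_of_ne_of_ne hj'.1 hj'.2]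
    rw [hvj]
    congr 1
    have hjn : (j : ℕ) < n + 1 := j.isLt
    have hkn : (k : ℕ) < n := k.isLt
    by_cases hcase : (j : ℕ) < (k : ℕ)
    · have h1 : (k : ℕ) - 1 < n := by omega
      have hswap : slotsD p n j (v ∘ Equiv.swap k.castSucc k.succ)
          = slotsD p n j v ∘ Equiv.swap (⟨(k : ℕ) - 1, h1⟩ : Fin n) (⟨(k : ℕ), hkn⟩ : Fin n) := by
        apply slotsD_comp_swap
        · constructor <;> intro h <;> simp only [Fin.val_mk] at h ⊢ <;> omega
        · rw [if_neg (by simp only [Fin.val_mk]; omega)]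
          apply Fin.ext
          simp only [Fin.val_succ, Fin.coe_castSucc, Fin.val_mk]
          omega
        · rw [if_neg (by simp only [Fin.val_mk]; omega)]
      rw [hswap, smk_perm]
    · have h2' : (k : ℕ) + 1 < n := by omega
      have hswap : slotsD p n j (v ∘ Equiv.swap k.castSucc k.succ)
          = slotsD p n j v ∘ Equiv.swap (⟨(k : ℕ), hkn⟩ : Fin n) (⟨(k : ℕ) + 1, h2'⟩ : Fin n) := by
        apply slotsD_comp_swap
        · constructor <;> intro h <;> simp only [Fin.val_mk] at h ⊢ <;> omega
        · rw [if_pos (by simp only [Fin.val_mk]; omega)]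
        · rw [if_pos (by simp only [Fin.val_mk]; omega)]
          apply Fin.ext
          simp only [Fin.coe_castSucc, Fin.val_succ, Fin.val_mk]
      rw [hswap, smk_perm]
  · -- the two exchanged terms
    have hkn : (k : ℕ) < n := k.isLt
    have hua : (v ∘ Equiv.swap k.castSucc k.succ) k.castSucc = v k.succ := by
      simp only [Function.comp_apply, Equiv.swap_apply_left]
    have hub : (v ∘ Equiv.swap k.castSucc k.succ) k.succ = v k.castSucc := by
      simp only [Function.comp_apply, Equiv.swap_apply_right]
    have hCa : slotsD p n k.castSucc (v ∘ Equiv.swap k.castSucc k.succ)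
        = Function.update (slotsD p n k.castSucc v) k (v k.castSucc) := by
      funext i
      rcases eq_or_ne i k with rfl | hik
      · rw [Function.update_self]
        simp only [slotsD, Function.comp_apply]
        rw [if_neg (by simp only [Fin.coe_castSucc]; omega), Equiv.swap_apply_right]
      · rw [Function.update_of_ne hik]
        have hiv : (i : ℕ) ≠ (k : ℕ) := fun h => hik (Fin.ext h)
        simp only [slotsD, Function.comp_apply]
        by_cases hi : (i : ℕ) < (k : ℕ)
        · rw [if_pos (by simp only [Fin.coe_castSucc]; omega),
            if_pos (by simp only [Fin.coe_castSucc]; omega),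
            Equiv.swap_apply_of_ne_of_ne
              (by intro hc; have := congrArg Fin.val hc;
                  simp only [Fin.coe_castSucc] at this; omega)
              (by intro hc; have := congrArg Fin.val hc;
                  simp only [Fin.coe_castSucc, Fin.val_succ] at this; omega)]
        · rw [if_neg (by simp only [Fin.coe_castSucc]; omega),
            if_neg (by simp only [Fin.coe_castSucc]; omega),
            Equiv.swap_apply_of_ne_of_ne
              (by intro hc; have := congrArg Fin.val hc;
                  simp only [Fin.coe_castSucc, Fin.val_succ] at this; omega)
              (by intro hc; have := congrArg Fin.val hc;
                  simp only [Fin.val_succ] at this; omega)]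
    have hCa' : slotsD p n k.castSucc v
        = Function.update (slotsD p n k.castSucc v) k (v k.succ) := by
      funext i
      rcases eq_or_ne i k with rfl | hik
      · rw [Function.update_self]
        simp only [slotsD]
        rw [if_neg (by simp only [Fin.coe_castSucc]; omega)]
      · rw [Function.update_of_ne hik]
    have hCb : slotsD p n k.succ (v ∘ Equiv.swap k.castSucc k.succ)
        = Function.update (slotsD p n k.castSucc v) k (p (v k.succ)) := by
      funext i
      rcases eq_or_ne i k with rfl | hik
      · rw [Function.update_self]
        simp only [slotsD, Function.comp_apply]
        rw [if_pos (by simp only [Fin.val_succ, Fin.coe_castSucc]; omega),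
          Equiv.swap_apply_left]
      · rw [Function.update_of_ne hik]
        have hiv : (i : ℕ) ≠ (k : ℕ) := fun h => hik (Fin.ext h)
        simp only [slotsD, Function.comp_apply]
        by_cases hi : (i : ℕ) < (k : ℕ)
        · rw [if_pos (by simp only [Fin.val_succ]; omega),
            if_pos (by simp only [Fin.coe_castSucc]; omega),
            Equiv.swap_apply_of_ne_of_ne
              (by intro hc; have := congrArg Fin.val hc;
                  simp only [Fin.coe_castSucc] at this; omega)
              (by intro hc; have := congrArg Fin.val hc;
                  simp only [Fin.coe_castSucc, Fin.val_succ] at this; omega)]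
        · rw [if_neg (by simp only [Fin.val_succ]; omega),
            if_neg (by simp only [Fin.coe_castSucc]; omega),
            Equiv.swap_apply_of_ne_of_ne
              (by intro hc; have := congrArg Fin.val hc;
                  simp only [Fin.coe_castSucc, Fin.val_succ] at this; omega)
              (by intro hc; have := congrArg Fin.val hc;
                  simp only [Fin.val_succ] at this; omega)]
    have hCb' : slotsD p n k.succ v
        = Function.update (slotsD p n k.castSucc v) k (p (v k.castSucc)) := by
      funext i
      rcases eq_or_ne i k with rfl | hik
      · rw [Function.update_self]
        simp only [slotsD]
        rw [if_pos (by simp only [Fin.val_succ, Fin.coe_castSucc]; omega)]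
      · rw [Function.update_of_ne hik]
        have hiv : (i : ℕ) ≠ (k : ℕ) := fun h => hik (Fin.ext h)
        simp only [slotsD]
        by_cases hi : (i : ℕ) < (k : ℕ)
        · rw [if_pos (by simp only [Fin.val_succ]; omega),
            if_pos (by simp only [Fin.coe_castSucc]; omega)]
        · rw [if_neg (by simp only [Fin.val_succ]; omega),
            if_neg (by simp only [Fin.coe_castSucc]; omega)]
    have hTlin : ∀ x : F,
        smk (A := A) n (tprod A (Function.update (slotsD p n k.castSucc v) k x))
          = r x • smk n (tprod A (Function.update (slotsD p n k.castSucc v) k e))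
            + smk n (tprod A (Function.update (slotsD p n k.castSucc v) k (p x))) := by
      intro x
      conv_lhs => rw [show x = r x • e + p x from (hK1 x).symm]
      rw [MultilinearMap.map_update_add, MultilinearMap.map_update_smul, map_add, map_smul]
    rw [hua, hub, hCa, hCb, hCb']
    conv_rhs => rw [hCa']
    rw [hTlin (v k.castSucc), hTlin (v k.succ), smul_add, smul_add, smul_smul, smul_smul,
      mul_comm (r (v k.succ)) (r (v k.castSucc)), Function.update_idem]
    abel

lemma Dfun_comp_perm (n : ℕ) (e : F) (hK1 : ∀ x : F, r x • e + p x = x)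
    (σ : Equiv.Perm (Fin (n + 1))) (v : Fin (n + 1) → F) :
    Dfun p r n (v ∘ σ) = Dfun p r n v := by
  have hσ : σ ∈ Submonoid.closure
      (Set.range fun i : Fin n => Equiv.swap i.castSucc i.succ) := by
    rw [Equiv.Perm.mclosure_swap_castSucc_succ]; trivial
  induction hσ using Submonoid.closure_induction generalizing v with
  | mem τ hτ =>
    obtain ⟨k, rfl⟩ := hτ
    exact Dfun_comp_swap p r n e hK1 k v
  | one => simp
  | mul σ₁ σ₂ h₁ h₂ ih₁ ih₂ =>
    rw [show v ∘ ⇑(σ₁ * σ₂) = (v ∘ σ₁) ∘ σ₂ from rfl, ih₂, ih₁]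

end Aux2
section Aux3

variable {A : Type*} [CommRing A] {F : Type*} [AddCommGroup F] [Module A F]
variable (p : F →ₗ[A] F) (r : F →ₗ[A] A)

lemma rho_reindex (n : ℕ) (e : F) (hK1 : ∀ x : F, r x • e + p x = x)
    (σ : Equiv.Perm (Fin (n + 1))) (t : ⨂[A] _ : Fin (n + 1), F) :
    PiTensorProduct.lift (Dfun p r n) (reindex A (fun _ => F) σ t)
      = PiTensorProduct.lift (Dfun p r n) t := by
  induction t using PiTensorProduct.induction_on with
  | smul_tprod c w =>
    simp only [map_smul, reindex_tprod, lift.tprod]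
    congr 1
    exact Dfun_comp_perm p r n e hK1 σ.symm w
  | add x y hx hy => simp only [map_add, hx, hy]

lemma rho_symRel (n : ℕ) (e : F) (hK1 : ∀ x : F, r x • e + p x = x) :
    symRel A F (n + 1) ≤ LinearMap.ker (PiTensorProduct.lift (Dfun p r n)) := by
  rw [symRel, Submodule.span_le]
  rintro x ⟨σ, t, rfl⟩
  simp only [SetLike.mem_coe, LinearMap.mem_ker, map_sub,
    rho_reindex p r n e hK1 σ t, sub_self]

/-- The contraction `Sym^{n+1} F → Sym^n F`, "division by `e`". -/
noncomputable def rhoQ (n : ℕ) (e : F) (hK1 : ∀ x : F, r x • e + p x = x) :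
    SymPow A F (n + 1) →ₗ[A] SymPow A F n :=
  Submodule.liftQ _ (PiTensorProduct.lift (Dfun p r n)) (rho_symRel p r n e hK1)

lemma rhoQ_mk (n : ℕ) (e : F) (hK1 : ∀ x : F, r x • e + p x = x)
    (t : ⨂[A] _ : Fin (n + 1), F) :
    rhoQ p r n e hK1 (Submodule.Quotient.mk t) = PiTensorProduct.lift (Dfun p r n) t :=
  rfl

lemma Dfun_cons (n : ℕ) (e : F) (hre : r e = 1) (hpe : p e = 0) (w : Fin n → F) :
    Dfun p r n (Fin.cons e w) = smk n (tprod A w) := by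
  rw [Dfun_apply]
  rw [Finset.sum_eq_single 0]
  · rw [Fin.cons_zero, hre, one_smul]
    have hslots : slotsD p n 0 (Fin.cons e w) = w := by
      funext i
      simp only [slotsD]
      rw [if_neg (by simp only [Fin.val_zero]; omega), Fin.cons_succ]
    rw [hslots]
  · intro j _ hj0
    have hjv : (j : ℕ) ≠ 0 := fun h => hj0 (Fin.ext h)
    have hn : 0 < n := by have := j.isLt; omega
    have hz : slotsD p n j (Fin.cons e w) (⟨0, hn⟩ : Fin n) = 0 := by
      have hlt : ((⟨0, hn⟩ : Fin n) : ℕ) < (j : ℕ) := by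
        first
        | omega
        | (simp only [Fin.val_mk]; omega)
      simp only [slotsD, if_pos hlt]
      rw [show ((⟨0, hn⟩ : Fin n).castSucc : Fin (n + 1)) = 0 from rfl, Fin.cons_zero, hpe]
    have hz' := MultilinearMap.map_coord_zero
      (tprod A (s := fun _ : Fin n => F)) (⟨0, hn⟩ : Fin n) hz
    rw [hz', map_zero, smul_zero]
  · intro h
    exact absurd (Finset.mem_univ _) h

lemma rho_insert (n : ℕ) (e : F) (hre : r e = 1) (hpe : p e = 0)
    (u : ⨂[A] _ : Fin n, F) :
    PiTensorProduct.lift (Dfun p r n)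
      (PiTensorProduct.lift (insertMultilinear A e n) u) = smk n u := by
  induction u using PiTensorProduct.induction_on with
  | smul_tprod c w =>
    rw [map_smul, map_smul, lift.tprod, insertMultilinear,
      MultilinearMap.curryLeft_apply, lift.tprod, map_smul]
    congr 1
    exact Dfun_cons p r n e hre hpe w
  | add x y hx hy => rw [map_add, map_add, map_add, hx, hy]

lemma telescope (n : ℕ) (e : F) (hK1 : ∀ x : F, r x • e + p x = x)
    (t : ⨂[A] _ : Fin (n + 1), F) :
    SymPow.mulByE A e n (PiTensorProduct.lift (Dfun p r n) t)
      + smk (n + 1) (PiTensorProduct.map (fun _ => p) t) = smk (n + 1) t := by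
  induction t using PiTensorProduct.induction_on with
  | add x y hx hy =>
    simp only [map_add]
    rw [← hx, ← hy]
    abel
  | smul_tprod c v =>
    rw [map_smul, map_smul, map_smul, map_smul, map_smul, ← smul_add]
    congr 1
    -- the key telescoping identity on a pure tensor
    rw [lift.tprod]
    set G : ℕ → SymPow A F (n + 1) := fun m =>
      smk (n + 1) (tprod A (fun i : Fin (n + 1) => if (i : ℕ) < m then p (v i) else v i))
      with hG
    have key : ∀ j : Fin (n + 1),
        SymPow.mulByE A e n (r (v j) • smk n (tprod A (slotsD p n j v)))
          = G (j : ℕ) - G ((j : ℕ) + 1) := by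
      intro j
      have hmul : SymPow.mulByE A e n (smk n (tprod A (slotsD p n j v)))
          = smk (n + 1) (tprod A (Fin.cons e (slotsD p n j v))) := by
        have h1 : SymPow.mulByE A e n (smk n (tprod A (slotsD p n j v)))
            = smk (n + 1) (PiTensorProduct.lift (insertMultilinear A e n)
                (tprod A (slotsD p n j v))) := rfl
        rw [h1, lift.tprod, insertMultilinear, MultilinearMap.curryLeft_apply]
      -- the permutation moving slot 0 to slot j
      set c : Equiv.Perm (Fin (n + 1)) := (finSuccEquiv n).trans (finSuccEquiv' j).symm
        with hc
      set mix : Fin (n + 1) → F := fun i => if (i : ℕ) < (j : ℕ) then p (v i) else v i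
        with hmix
      have hcomp : Function.update mix j e ∘ c = Fin.cons e (slotsD p n j v) := by
        funext x
        by_cases hx0 : x = (0 : Fin (n + 1))
        · subst hx0
          have h0 : c 0 = j := by
            simp [hc, finSuccEquiv_zero, finSuccEquiv'_symm_none]
          rw [Function.comp_apply, h0, Function.update_self, Fin.cons_zero]
        · obtain ⟨i, rfl⟩ := Fin.exists_succ_eq.mpr hx0
          have hs : c i.succ = j.succAbove i := by
            simp [hc, finSuccEquiv_succ, finSuccEquiv'_symm_some]
          rw [Function.comp_apply, hs, Fin.cons_succ]
          by_cases h : (i : ℕ) < (j : ℕ)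
          · have hlt : i.castSucc < j := by
              rw [Fin.lt_def, Fin.coe_castSucc]; exact h
            rw [Fin.succAbove_of_castSucc_lt _ _ hlt,
              Function.update_of_ne hlt.ne]
            simp only [hmix, slotsD, Fin.coe_castSucc]
            rw [if_pos h, if_pos h]
          · have hle : j ≤ i.castSucc := by
              rw [Fin.le_def, Fin.coe_castSucc]; omega
            have hgt : j < i.succ := by
              rw [Fin.lt_def, Fin.val_succ]; omega
            rw [Fin.succAbove_of_le_castSucc _ _ hle,
              Function.update_of_ne hgt.ne']
            simp only [hmix, slotsD, Fin.val_succ]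
            rw [if_neg (by omega), if_neg h]
      have hGj : G (j : ℕ) = smk (n + 1) (tprod A (Function.update mix j (v j))) := by
        simp only [hG]
        have hfun : (fun i : Fin (n + 1) => if (i : ℕ) < (j : ℕ) then p (v i) else v i)
            = Function.update mix j (v j) := by
          funext i
          rcases eq_or_ne i j with rfl | hij
          · rw [Function.update_self, if_neg (by omega)]
          · rw [Function.update_of_ne hij]
        rw [hfun]
      have hGj1 : G ((j : ℕ) + 1) = smk (n + 1) (tprod A (Function.update mix j (p (v j)))) := by
        simp only [hG]
        have hfun : (fun i : Fin (n + 1) => if (i : ℕ) < (j : ℕ) + 1 then p (v i) else v i)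
            = Function.update mix j (p (v j)) := by
          funext i
          rcases eq_or_ne i j with rfl | hij
          · rw [Function.update_self, if_pos (by omega)]
          · have hij' : (i : ℕ) ≠ (j : ℕ) := fun h => hij (Fin.ext h)
            rw [Function.update_of_ne hij]
            simp only [hmix]
            rcases lt_or_ge (i : ℕ) (j : ℕ) with h | h
            · rw [if_pos (by omega), if_pos h]
            · rw [if_neg (by omega), if_neg (by omega)]
        rw [hfun]
      rw [map_smul, hmul, hGj, hGj1]
      rw [show smk (A := A) (n + 1) (tprod A (Fin.cons e (slotsD p n j v)))
          = smk (n + 1) (tprod A (Function.update mix j e)) from by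
        rw [← hcomp, smk_perm]]
      rw [show Function.update mix j (v j)
          = Function.update mix j (r (v j) • e + p (v j)) from by rw [hK1]]
      rw [MultilinearMap.map_update_add, MultilinearMap.map_update_smul, map_add, map_smul]
      abel
    calc SymPow.mulByE A e n (Dfun p r n v) + smk (n + 1) (PiTensorProduct.map (fun _ => p) (tprod A v))
        = (∑ j : Fin (n + 1), (G (j : ℕ) - G ((j : ℕ) + 1)))
            + smk (n + 1) (PiTensorProduct.map (fun _ => p) (tprod A v)) := by
          rw [Dfun_apply, map_sum]
          congr 1
          exact Finset.sum_congr rfl fun j _ => key j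
      _ = (G 0 - G (n + 1)) + smk (n + 1) (PiTensorProduct.map (fun _ => p) (tprod A v)) := by
          congr 1
          rw [Fin.sum_univ_eq_sum_range (fun m => G m - G (m + 1)) (n + 1),
            Finset.sum_range_sub' G (n + 1)]
      _ = smk (n + 1) (tprod A v) := by
          have h0 : G 0 = smk (n + 1) (tprod A v) := by
            simp only [hG]
            have hfun : (fun i : Fin (n + 1) => if (i : ℕ) < 0 then p (v i) else v i) = v := by
              funext i
              rw [if_neg (by omega)]
            rw [hfun]
          have htop : G (n + 1) = smk (n + 1) (PiTensorProduct.map (fun _ => p) (tprod A v)) := by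
            simp only [hG]
            rw [PiTensorProduct.map_tprod]
            have hfun : (fun i : Fin (n + 1) => if (i : ℕ) < n + 1 then p (v i) else v i)
                = fun i => p (v i) := by
              funext i
              rw [if_pos i.isLt]
            rw [hfun]
          rw [h0, htop]
          abel

end Aux3
section Aux4

variable {A : Type*} [CommRing A]

lemma map_symRel_mem {M N : Type*} [AddCommGroup M] [Module A M]
    [AddCommGroup N] [Module A N] (f : M →ₗ[A] N) (n : ℕ)
    {u : ⨂[A] _ : Fin n, M} (hu : u ∈ symRel A M n) :
    PiTensorProduct.map (fun _ : Fin n => f) u ∈ symRel A N n := by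
  have hle : symRel A M n ≤ (symRel A N n).comap (PiTensorProduct.map fun _ => f) := by
    rw [symRel, Submodule.span_le]
    rintro x ⟨σ, t, rfl⟩
    have h : PiTensorProduct.map (fun _ : Fin n => f)
          (reindex A (fun _ => M) σ t) =
        reindex A (fun _ => N) σ (PiTensorProduct.map (fun _ : Fin n => f) t) := by
      simpa using PiTensorProduct.map_reindex (fun _ : Fin n => f) σ t
    simp only [SetLike.mem_coe, Submodule.mem_comap, map_sub, h]
    exact Submodule.subset_span ⟨σ, PiTensorProduct.map (fun _ => f) t, rfl⟩
  exact hle hu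

lemma mapPi_insert_zero {F E : Type*} [AddCommGroup F] [Module A F]
    [AddCommGroup E] [Module A E] (π : F →ₗ[A] E) (e : F) (hπe : π e = 0)
    (n : ℕ) (u : ⨂[A] _ : Fin n, F) :
    PiTensorProduct.map (fun _ : Fin (n + 1) => π)
      (PiTensorProduct.lift (insertMultilinear A e n) u) = 0 := by
  induction u using PiTensorProduct.induction_on with
  | smul_tprod c w =>
    rw [map_smul, map_smul, lift.tprod, insertMultilinear,
      MultilinearMap.curryLeft_apply]
    simp only [PiTensorProduct.map_tprod]
    have hz0 : tprod A (fun i : Fin (n + 1) => π ((Fin.cons e w : Fin (n + 1) → F) i))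
        = (0 : ⨂[A] _ : Fin (n + 1), E) :=
      MultilinearMap.map_coord_zero _ (0 : Fin (n + 1))
        (by show π ((Fin.cons e w : Fin (n + 1) → F) 0) = 0; rw [Fin.cons_zero]; exact hπe)
    rw [hz0, smul_zero]
  | add x y hx hy => rw [map_add, map_add, hx, hy, add_zero]

end Aux4
theorem statement8 (F E : Type*) [AddCommGroup F] [Module A F]
    [AddCommGroup E] [Module A E] [Module.Projective A E]
    (ι : A →ₗ[A] F) (π : F →ₗ[A] E)
    (hinj : Function.Injective ι) (hsurj : Function.Surjective π)
    (hexact : Function.Exact ι π) :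
    -- for every n ≥ 1 (written n + 1), the sequence
    -- 0 → Sym^n(F) → Sym^{n+1}(F) → Sym^{n+1}(E) → 0 is exact
    ∀ n : ℕ,
      Function.Injective (SymPow.mulByE A (ι 1) n) ∧
      Function.Surjective (SymPow.map A π (n + 1)) ∧
      Function.Exact (SymPow.mulByE A (ι 1) n) (SymPow.map A π (n + 1)) := by
  intro n
  obtain ⟨s, hs⟩ := Module.projective_lifting_property π LinearMap.id hsurj
  set e := ι 1 with he
  set p : F →ₗ[A] F := s ∘ₗ π with hp
  have hπp : ∀ x : F, π (x - p x) = 0 := by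
    intro x
    have h1 : π (s (π x)) = π x := LinearMap.congr_fun hs (π x)
    rw [map_sub, hp, LinearMap.comp_apply, h1, sub_self]
  have hmem : ∀ x : F, ∃ a : A, ι a = x - p x := fun x => (hexact (x - p x)).mp (hπp x)
  choose g hg using hmem
  let r : F →ₗ[A] A :=
    { toFun := g
      map_add' := fun x y => hinj (by
        rw [show ι (g x + g y) = ι (g x) + ι (g y) from map_add ι _ _, hg, hg, hg,
          show p (x + y) = p x + p y from map_add p _ _]
        abel)
      map_smul' := fun c x => hinj (by
        rw [show ι ((RingHom.id A) c • g x) = c • ι (g x) from map_smul ι _ _, hg, hg,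
          show p (c • x) = c • p x from map_smul p _ _, smul_sub]) }
  have hgr : ∀ x : F, ι (r x) = x - p x := hg
  have hK1 : ∀ x : F, r x • e + p x = x := by
    intro x
    have h1 : r x • e = ι (r x) := by
      rw [he, ← map_smul, smul_eq_mul, mul_one]
    rw [h1, hgr]
    abel
  have hπe : π e = 0 := by rw [he]; exact hexact.apply_apply_eq_zero 1
  have hpe : p e = 0 := by rw [hp, LinearMap.comp_apply, hπe, map_zero]
  have hre : r e = 1 := hinj (by rw [hgr, hpe, sub_zero, he])
  refine ⟨?_, ?_, ?_⟩
  · -- injectivity of multiplication by e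
    have hsec : ∀ z : SymPow A F n, rhoQ p r n e hK1 (SymPow.mulByE A e n z) = z := by
      intro z
      obtain ⟨u, rfl⟩ := Submodule.Quotient.mk_surjective (symRel A F n) z
      rw [show SymPow.mulByE A e n (Submodule.Quotient.mk u)
          = Submodule.Quotient.mk (PiTensorProduct.lift (insertMultilinear A e n) u)
          from rfl,
        rhoQ_mk, rho_insert p r n e hre hpe u]
      rfl
    intro x y hxy
    rw [← hsec x, hxy, hsec y]
  · -- surjectivity
    intro y
    obtain ⟨t, rfl⟩ := Submodule.Quotient.mk_surjective (symRel A E (n + 1)) y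
    refine ⟨Submodule.Quotient.mk (PiTensorProduct.map (fun _ => s) t), ?_⟩
    rw [show SymPow.map A π (n + 1)
        (Submodule.Quotient.mk (PiTensorProduct.map (fun _ => s) t))
        = Submodule.Quotient.mk (PiTensorProduct.map (fun _ : Fin (n + 1) => π)
            (PiTensorProduct.map (fun _ => s) t)) from rfl]
    congr 1
    calc PiTensorProduct.map (fun _ : Fin (n + 1) => π)
          (PiTensorProduct.map (fun _ => s) t)
        = PiTensorProduct.map (fun _ : Fin (n + 1) => π ∘ₗ s) t := by
          rw [PiTensorProduct.map_comp]; rfl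
      _ = PiTensorProduct.map (fun _ : Fin (n + 1) => (LinearMap.id : E →ₗ[A] E)) t := by
          rw [hs]
      _ = t := by rw [PiTensorProduct.map_id]; rfl
  · -- exactness
    intro y
    constructor
    · intro h0
      obtain ⟨t, rfl⟩ := Submodule.Quotient.mk_surjective (symRel A F (n + 1)) y
      have h1 : PiTensorProduct.map (fun _ : Fin (n + 1) => π) t ∈ symRel A E (n + 1) := by
        rw [show SymPow.map A π (n + 1) (Submodule.Quotient.mk t)
            = Submodule.Quotient.mk (PiTensorProduct.map (fun _ : Fin (n + 1) => π) t)
            from rfl] at h0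
        exact (Submodule.Quotient.mk_eq_zero _).mp h0
      have h2 : smk (n + 1) (PiTensorProduct.map (fun _ : Fin (n + 1) => p) t)
          = (0 : SymPow A F (n + 1)) := by
        have hcomp : PiTensorProduct.map (fun _ : Fin (n + 1) => p) t
            = PiTensorProduct.map (fun _ : Fin (n + 1) => s)
                (PiTensorProduct.map (fun _ => π) t) := by
          rw [show (fun _ : Fin (n + 1) => p) = fun _ : Fin (n + 1) => s ∘ₗ π from rfl,
            PiTensorProduct.map_comp]
          rfl
        rw [hcomp]
        exact (Submodule.Quotient.mk_eq_zero _).mpr (map_symRel_mem s (n + 1) h1)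
      refine ⟨PiTensorProduct.lift (Dfun p r n) t, ?_⟩
      have h3 := telescope p r n e hK1 t
      rw [h2, add_zero] at h3
      exact h3
    · rintro ⟨z, rfl⟩
      obtain ⟨u, rfl⟩ := Submodule.Quotient.mk_surjective (symRel A F n) z
      rw [show SymPow.mulByE A e n (Submodule.Quotient.mk u)
          = Submodule.Quotient.mk (PiTensorProduct.lift (insertMultilinear A e n) u)
          from rfl,
        show SymPow.map A π (n + 1) (Submodule.Quotient.mk
            (PiTensorProduct.lift (insertMultilinear A e n) u))
          = Submodule.Quotient.mk (PiTensorProduct.map (fun _ : Fin (n + 1) => π)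
              (PiTensorProduct.lift (insertMultilinear A e n) u)) from rfl,
        mapPi_insert_zero π e hπe n u, Submodule.Quotient.mk_zero]
      rfl
end
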